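/- Let B be the m×m Jordan block with eigenvalue λ ∈ ℂ, λ ≠ 0. Then ‖B^k‖_op / |b_{1m}(k)| → 1 as k → ∞, where b_{1m}(k) = C(k, m−1) λ^{k−(m−1)} is the top-right entry of B^k. Consequently, ‖B^{k+1}‖_op / ‖B^k‖_op → |λ| as k → ∞. -/

import Mathlib

open Filter

noncomputable def opNormC {m : ℕ} (A : Matrix (Fin m) (Fin m) ℂ) : ℝ :=
  ‖Matrix.toEuclideanCLM (𝕜 := ℂ) A‖

section Aux
open Finset


lemma euclid_apply_le_norm {m : ℕ} (y : EuclideanSpace ℂ (Fin m)) (i : Fin m) :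
    ‖y i‖ ≤ ‖y‖ := by
  rw [EuclideanSpace.norm_eq]
  calc ‖y i‖ = Real.sqrt (‖y i‖ ^ 2) := (Real.sqrt_sq (norm_nonneg _)).symm
    _ ≤ _ := Real.sqrt_le_sqrt (Finset.single_le_sum (f := fun j => ‖y j‖ ^ 2)
        (fun j _ => sq_nonneg _) (Finset.mem_univ i))

lemma euclid_norm_le_sum {m : ℕ} (y : EuclideanSpace ℂ (Fin m)) :
    ‖y‖ ≤ ∑ i, ‖y i‖ := by
  rw [EuclideanSpace.norm_eq]
  calc Real.sqrt (∑ i, ‖y i‖ ^ 2) ≤ Real.sqrt ((∑ i, ‖y i‖) ^ 2) :=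
        Real.sqrt_le_sqrt (Finset.sum_sq_le_sq_sum_of_nonneg (fun j _ => norm_nonneg _))
    _ = ∑ i, ‖y i‖ := Real.sqrt_sq (Finset.sum_nonneg fun j _ => norm_nonneg _)

lemma toEuclideanCLM_apply {m : ℕ} (A : Matrix (Fin m) (Fin m) ℂ)
    (x : EuclideanSpace ℂ (Fin m)) (i : Fin m) :
    (Matrix.toEuclideanCLM (𝕜 := ℂ) A x) i = ∑ j, A i j * x j := by
  rfl

lemma opNormC_entry_le {m : ℕ} (A : Matrix (Fin m) (Fin m) ℂ) (i j : Fin m) :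
    ‖A i j‖ ≤ opNormC A := by
  have h1 : ‖A i j‖
      = ‖(Matrix.toEuclideanCLM (𝕜 := ℂ) A (EuclideanSpace.single j 1)) i‖ := by
    rw [toEuclideanCLM_apply]
    congr 1
    rw [Finset.sum_eq_single j (by intro l _ hl; simp [EuclideanSpace.single_apply, hl])
      (by simp)]
    simp [EuclideanSpace.single_apply]
  calc ‖A i j‖
      = ‖(Matrix.toEuclideanCLM (𝕜 := ℂ) A (EuclideanSpace.single j 1)) i‖ := h1
    _ ≤ ‖Matrix.toEuclideanCLM (𝕜 := ℂ) A (EuclideanSpace.single j 1)‖ :=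
        euclid_apply_le_norm _ i
    _ ≤ opNormC A * ‖(EuclideanSpace.single j (1:ℂ) : EuclideanSpace ℂ (Fin m))‖ :=
        ContinuousLinearMap.le_opNorm _ _
    _ = opNormC A := by rw [EuclideanSpace.norm_single]; simp

lemma opNormC_le_sum {m : ℕ} (A : Matrix (Fin m) (Fin m) ℂ) :
    opNormC A ≤ ∑ i, ∑ j, ‖A i j‖ := by
  apply ContinuousLinearMap.opNorm_le_bound _
    (Finset.sum_nonneg fun i _ => Finset.sum_nonneg fun j _ => norm_nonneg _)
  intro x
  calc ‖Matrix.toEuclideanCLM (𝕜 := ℂ) A x‖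
      ≤ ∑ i, ‖(Matrix.toEuclideanCLM (𝕜 := ℂ) A x) i‖ := euclid_norm_le_sum _
    _ ≤ ∑ i, ∑ j, ‖A i j‖ * ‖x‖ := by
        apply Finset.sum_le_sum
        intro i _
        rw [toEuclideanCLM_apply]
        calc ‖∑ j, A i j * x j‖ ≤ ∑ j, ‖A i j * x j‖ := norm_sum_le _ _
          _ ≤ ∑ j, ‖A i j‖ * ‖x‖ := by
              apply Finset.sum_le_sum
              intro j _
              rw [norm_mul]
              exact mul_le_mul_of_nonneg_left (euclid_apply_le_norm x j) (norm_nonneg _)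
    _ = (∑ i, ∑ j, ‖A i j‖) * ‖x‖ := by
        rw [Finset.sum_mul]
        exact Finset.sum_congr rfl fun i _ => (Finset.sum_mul _ _ _).symm


lemma shift_pow {m : ℕ} (N : Matrix (Fin m) (Fin m) ℂ)
    (hN : ∀ i j : Fin m, N i j = if (j : ℕ) = (i : ℕ) + 1 then 1 else 0) :
    ∀ (d : ℕ) (i j : Fin m), (N ^ d) i j = if (j : ℕ) = (i : ℕ) + d then 1 else 0 := by
  intro d
  induction d with
  | zero =>
    intro i j
    simp [Matrix.one_apply, Fin.ext_iff, eq_comm]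
  | succ d ih =>
    intro i j
    rw [pow_succ, Matrix.mul_apply]
    by_cases h : (j : ℕ) = (i : ℕ) + d + 1
    · have hd : (i : ℕ) + d < m := by omega
      rw [Finset.sum_eq_single (⟨(i : ℕ) + d, hd⟩ : Fin m)]
      · rw [ih, hN]
        simp [h, Nat.add_assoc]
      · intro l _ hl
        rw [ih]
        have : (l : ℕ) ≠ (i : ℕ) + d := fun hc => hl (Fin.ext hc)
        simp [this]
      · simp
    · rw [if_neg (show ¬(j : ℕ) = (i : ℕ) + (d + 1) by omega)]
      apply Finset.sum_eq_zero
      intro l _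
      rw [ih, hN]
      by_cases h1 : (l : ℕ) = (i : ℕ) + d
      · have h2 : (j : ℕ) ≠ (l : ℕ) + 1 := by omega
        simp [h1, h2, h]
      · simp [h1]

lemma jordan_pow_entry {m : ℕ} (lam : ℂ) (B : Matrix (Fin m) (Fin m) ℂ)
    (hB : ∀ i j : Fin m, B i j =
      if j = i then lam else if (j : ℕ) = (i : ℕ) + 1 then 1 else 0)
    (k : ℕ) (i j : Fin m) :
    (B ^ k) i j = if (i : ℕ) ≤ (j : ℕ) then
      (Nat.choose k ((j : ℕ) - (i : ℕ)) : ℂ) * lam ^ (k - ((j : ℕ) - (i : ℕ))) else 0 := by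
  set N : Matrix (Fin m) (Fin m) ℂ :=
    Matrix.of (fun i j : Fin m => if (j : ℕ) = (i : ℕ) + 1 then (1 : ℂ) else 0) with hNdef
  have hN : ∀ i j : Fin m, N i j = if (j : ℕ) = (i : ℕ) + 1 then 1 else 0 := fun i j => rfl
  have hNpow := shift_pow N hN
  have hBeq : B = lam • (1 : Matrix (Fin m) (Fin m) ℂ) + N := by
    ext a c
    rw [hB]
    by_cases h : c = a
    · have : (c : ℕ) ≠ (a : ℕ) + 1 := by omega
      simp [Matrix.one_apply, h, this, hN]
    · have h' : a ≠ c := fun hc => h hc.symm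
      simp [Matrix.one_apply, h, h', hN]
  have hcomm : Commute (lam • (1 : Matrix (Fin m) (Fin m) ℂ)) N :=
    (Commute.one_left N).smul_left lam
  rw [hBeq, hcomm.add_pow]
  rw [Matrix.sum_apply]
  have hterm : ∀ n, ((lam • (1 : Matrix (Fin m) (Fin m) ℂ)) ^ n * N ^ (k - n) *
      (Nat.choose k n : Matrix (Fin m) (Fin m) ℂ)) i j
      = lam ^ n * (Nat.choose k n : ℂ) * (N ^ (k - n)) i j := by
    intro n
    have hc : (Nat.choose k n : Matrix (Fin m) (Fin m) ℂ)
        = (Nat.choose k n : ℂ) • (1 : Matrix (Fin m) (Fin m) ℂ) := by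
      rw [Nat.cast_smul_eq_nsmul, nsmul_eq_mul, mul_one]
    rw [smul_pow, one_pow, smul_mul_assoc, one_mul, hc, mul_smul_comm, mul_one,
      Matrix.smul_apply, Matrix.smul_apply, smul_eq_mul, smul_eq_mul]
    ring
  by_cases hij : (i : ℕ) ≤ (j : ℕ)
  · rw [if_pos hij]
    by_cases hk : (j : ℕ) - (i : ℕ) ≤ k
    · set d := (j : ℕ) - (i : ℕ) with hd
      rw [Finset.sum_eq_single (k - d)]
      · rw [hterm, hNpow]
        have h1 : (j : ℕ) = (i : ℕ) + (k - (k - d)) := by omega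
        rw [if_pos h1, mul_one]
        have h2 : k - (k - d) = d := by omega
        rw [Nat.choose_symm hk, mul_comm]
      · intro n hn hne
        rw [hterm, hNpow]
        have : (j : ℕ) ≠ (i : ℕ) + (k - n) := by
          simp only [Finset.mem_range] at hn
          omega
        simp [this]
      · intro h
        exact absurd (Finset.mem_range.mpr (by omega)) h
    · rw [Nat.choose_eq_zero_of_lt (by omega)]
      simp only [Nat.cast_zero, zero_mul]
      apply Finset.sum_eq_zero
      intro n hn
      rw [hterm, hNpow]
      simp only [Finset.mem_range] at hn
      have : (j : ℕ) ≠ (i : ℕ) + (k - n) := by omega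
      simp [this]
  · rw [if_neg hij]
    apply Finset.sum_eq_zero
    intro n hn
    rw [hterm, hNpow]
    have : (j : ℕ) ≠ (i : ℕ) + (k - n) := by omega
    simp [this]


lemma choose_mono_right {k d e : ℕ} (hde : d ≤ e) (he : e ≤ k / 2) :
    Nat.choose k d ≤ Nat.choose k e := by
  induction hde with
  | refl => exact le_rfl
  | @step e' he' ih =>
    exact (ih (by omega)).trans (Nat.choose_le_succ_of_lt_half_left (by omega))

lemma choose_ratio_tendsto_zero {d r : ℕ} (hdr : d < r) :
    Tendsto (fun k : ℕ => (Nat.choose k d : ℝ) / (Nat.choose k r : ℝ)) atTop (nhds 0) := by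
  have hub : Tendsto (fun k : ℕ => (r : ℝ) / ((k : ℝ) - r + 1)) atTop (nhds 0) := by
    apply Tendsto.div_atTop (tendsto_const_nhds)
    have : Tendsto (fun k : ℕ => (k : ℝ)) atTop atTop := tendsto_natCast_atTop_atTop
    have := this.atTop_add (tendsto_const_nhds (x := (1 : ℝ) - r))
    refine this.congr fun k => by ring
  apply tendsto_of_tendsto_of_tendsto_of_le_of_le' tendsto_const_nhds hub
  · filter_upwards with k
    positivity
  · filter_upwards [eventually_ge_atTop (2 * r)] with k hk
    have hrk : r ≤ k := by omega
    have h1 : Nat.choose k d ≤ Nat.choose k (r - 1) :=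
      choose_mono_right (by omega) (by omega)
    have h2 : Nat.choose k r * r = Nat.choose k (r - 1) * (k - r + 1) := by
      have := Nat.choose_succ_right_eq k (r - 1)
      have hr1 : r - 1 + 1 = r := by omega
      rw [hr1] at this
      rw [this]
      congr 1
      omega
    have hnat : Nat.choose k d * (k - r + 1) ≤ Nat.choose k r * r := by
      rw [h2]
      exact Nat.mul_le_mul_right _ h1
    have hpos : (0 : ℝ) < (Nat.choose k r : ℝ) := by
      exact_mod_cast Nat.choose_pos hrk
    have hden : (0 : ℝ) < (k : ℝ) - r + 1 := by
      have : (r : ℝ) ≤ (k : ℝ) := by exact_mod_cast hrk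
      linarith
    rw [div_le_div_iff₀ hpos hden, mul_comm ((r:ℝ))]
    calc (Nat.choose k d : ℝ) * ((k : ℝ) - r + 1)
        = ((Nat.choose k d * (k - r + 1) : ℕ) : ℝ) := by
          push_cast [Nat.cast_sub hrk]
          ring
      _ ≤ ((Nat.choose k r * r : ℕ) : ℝ) := by exact_mod_cast hnat
      _ = (Nat.choose k r : ℝ) * r := by push_cast; ring

lemma choose_succ_ratio_tendsto_one (r : ℕ) :
    Tendsto (fun k : ℕ => (Nat.choose (k + 1) r : ℝ) / (Nat.choose k r : ℝ))
      atTop (nhds 1) := by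
  rcases Nat.eq_zero_or_pos r with hr | hr
  · subst hr
    simpa using tendsto_const_nhds (x := (1 : ℝ)) (f := atTop (α := ℕ))
  · obtain ⟨s, rfl⟩ : ∃ s, r = s + 1 := ⟨r - 1, by omega⟩
    have h0 := (choose_ratio_tendsto_zero (show s < s + 1 by omega)).add
      (tendsto_const_nhds (x := (1 : ℝ)))
    rw [zero_add] at h0
    apply h0.congr'
    filter_upwards [eventually_ge_atTop (s + 1)] with k hk
    have hpos : (0 : ℝ) < (Nat.choose k (s + 1) : ℝ) := by exact_mod_cast Nat.choose_pos hk
    rw [Nat.choose_succ_succ k s]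
    push_cast
    field_simp

end Aux

/-- asymptotics of the operator norm of powers of a Jordan block. -/
theorem jordan_block_pow_opNorm_asymptotics {m : ℕ} (hm : 0 < m) (lam : ℂ)
    (hlam : lam ≠ 0)
    (B : Matrix (Fin m) (Fin m) ℂ)
    (hB : ∀ i j : Fin m, B i j =
      if j = i then lam else if (j : ℕ) = (i : ℕ) + 1 then 1 else 0)
    (b : ℕ → ℂ)
    (hb : ∀ k, b k = (Nat.choose k (m - 1) : ℂ) * lam ^ (k - (m - 1))) :
    Tendsto (fun k : ℕ => opNormC (B ^ k) / ‖b k‖) atTop (nhds 1) ∧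
      Tendsto (fun k : ℕ => opNormC (B ^ (k + 1)) / opNormC (B ^ k)) atTop
        (nhds (‖lam‖)) := by
  set r := m - 1 with hrdef
  have hrm : r < m := by omega
  have hc : 0 < ‖lam‖ := norm_pos_iff.mpr hlam
  have hu : ∀ k, ‖b k‖
      = (Nat.choose k r : ℝ) * ‖lam‖ ^ (k - r) := by
    intro k
    rw [hb, norm_mul, norm_pow, Complex.norm_natCast]
  have hupos : ∀ k, r ≤ k → 0 < ‖b k‖ := by
    intro k hk
    rw [hu]
    exact mul_pos (by exact_mod_cast Nat.choose_pos hk) (pow_pos hc _)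
  have hP := jordan_pow_entry lam B hB
  set i0 : Fin m := ⟨0, hm⟩ with hi0def
  set j0 : Fin m := ⟨r, hrm⟩ with hj0def
  have hB0 : ∀ k, (B ^ k) i0 j0 = b k := by
    intro k
    rw [hP k i0 j0, if_pos (Nat.zero_le _), hb]
    norm_num
    rfl
  have hrho : ∀ p : Fin m × Fin m,
      Tendsto (fun k => ‖(B ^ k) p.1 p.2‖ / ‖b k‖) atTop
        (nhds (if p = (i0, j0) then 1 else 0)) := by
    rintro ⟨i, j⟩
    by_cases hij : (i : ℕ) ≤ (j : ℕ)
    · set d := (j : ℕ) - (i : ℕ) with hddef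
      have hdr : d ≤ r := by omega
      rcases eq_or_lt_of_le hdr with hde | hdlt
      · have hij0 : (i : ℕ) = 0 ∧ (j : ℕ) = r := by omega
        have hp : ((i, j) : Fin m × Fin m) = (i0, j0) :=
          Prod.ext (Fin.ext hij0.1) (Fin.ext hij0.2)
        rw [if_pos hp]
        apply Tendsto.congr' _ (tendsto_const_nhds (x := (1 : ℝ)))
        filter_upwards [eventually_ge_atTop r] with k hk
        have hi : i = i0 := Fin.ext hij0.1
        have hj : j = j0 := Fin.ext hij0.2
        rw [hi, hj, hB0 k, div_self (hupos k hk).ne']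
      · have hpne : ((i, j) : Fin m × Fin m) ≠ (i0, j0) := by
          intro hp
          rw [Prod.mk.injEq] at hp
          have h1 : (i : ℕ) = 0 := congrArg Fin.val hp.1
          have h2 : (j : ℕ) = r := congrArg Fin.val hp.2
          omega
        rw [if_neg hpne]
        have base := (choose_ratio_tendsto_zero hdlt).mul_const
          (‖lam‖ ^ (r - d))
        rw [zero_mul] at base
        apply Tendsto.congr' _ base
        filter_upwards [eventually_ge_atTop r] with k hk
        rw [hP k i j, if_pos hij, norm_mul, norm_pow, Complex.norm_natCast, hu, ← hddef]
        have hsplit : ‖lam‖ ^ (k - d)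
            = ‖lam‖ ^ (k - r) * ‖lam‖ ^ (r - d) := by
          rw [← pow_add]
          congr 1
          omega
        rw [hsplit,
          show (Nat.choose k d : ℝ) * (‖lam‖ ^ (k - r) * ‖lam‖ ^ (r - d))
            = ((Nat.choose k d : ℝ) * ‖lam‖ ^ (r - d)) * ‖lam‖ ^ (k - r)
            from by ring,
          mul_div_mul_right _ _ (pow_ne_zero _ hc.ne'), mul_div_right_comm]
    · have hpne : ((i, j) : Fin m × Fin m) ≠ (i0, j0) := by
        intro hp
        rw [Prod.mk.injEq] at hp
        have h1 : (i : ℕ) = 0 := congrArg Fin.val hp.1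
        omega
      rw [if_neg hpne]
      apply Tendsto.congr _ (tendsto_const_nhds (x := (0 : ℝ)))
      intro k
      rw [hP k i j, if_neg hij]
      simp
  have hsum : Tendsto
      (fun k => ∑ p : Fin m × Fin m, ‖(B ^ k) p.1 p.2‖ / ‖b k‖)
      atTop (nhds 1) := by
    have h := tendsto_finset_sum (Finset.univ : Finset (Fin m × Fin m))
      (fun p _ => hrho p)
    have hval : (∑ p : Fin m × Fin m, if p = (i0, j0) then (1 : ℝ) else 0) = 1 := by
      rw [Finset.sum_ite_eq' Finset.univ ((i0, j0) : Fin m × Fin m) (fun _ => (1 : ℝ))]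
      simp
    rwa [hval] at h
  have part1 : Tendsto (fun k : ℕ => opNormC (B ^ k) / ‖b k‖) atTop (nhds 1) := by
    apply tendsto_of_tendsto_of_tendsto_of_le_of_le' tendsto_const_nhds hsum
    · filter_upwards [eventually_ge_atTop r] with k hk
      rw [le_div_iff₀ (hupos k hk), one_mul, ← hB0 k]
      exact opNormC_entry_le _ i0 j0
    · filter_upwards [eventually_ge_atTop r] with k hk
      rw [← Finset.sum_div, div_le_div_iff_of_pos_right (hupos k hk)]
      calc opNormC (B ^ k) ≤ ∑ i, ∑ j, ‖(B ^ k) i j‖ := opNormC_le_sum _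
        _ = ∑ p : Fin m × Fin m, ‖(B ^ k) p.1 p.2‖ :=
            (Fintype.sum_prod_type' (f := fun i j => ‖(B ^ k) i j‖)).symm
  refine ⟨part1, ?_⟩
  have hur : Tendsto (fun k => ‖b (k + 1)‖ / ‖b k‖) atTop
      (nhds (‖lam‖)) := by
    have base := (choose_succ_ratio_tendsto_one r).mul_const (‖lam‖)
    rw [one_mul] at base
    apply Tendsto.congr' _ base
    filter_upwards [eventually_ge_atTop r] with k hk
    rw [hu, hu]
    have hsplit : ‖lam‖ ^ (k + 1 - r)
        = ‖lam‖ ^ (k - r) * ‖lam‖ := by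
      rw [← pow_succ]
      congr 1
      omega
    rw [hsplit,
      show (Nat.choose (k + 1) r : ℝ) * (‖lam‖ ^ (k - r) * ‖lam‖)
        = ((Nat.choose (k + 1) r : ℝ) * ‖lam‖) * ‖lam‖ ^ (k - r)
        from by ring,
      mul_div_mul_right _ _ (pow_ne_zero _ hc.ne'), mul_div_right_comm]
  have hN0 : ∀ᶠ k in atTop, 0 < opNormC (B ^ k) := by
    filter_upwards [part1.eventually (eventually_gt_nhds (show (1:ℝ)/2 < 1 by norm_num)),
      eventually_ge_atTop r] with k h1 h2
    rw [lt_div_iff₀ (hupos k h2)] at h1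
    have := hupos k h2
    nlinarith
  have hshift : Tendsto (fun k : ℕ => opNormC (B ^ (k + 1)) / ‖b (k + 1)‖)
      atTop (nhds 1) := part1.comp (tendsto_add_atTop_nat 1)
  have hdiv := (hshift.div part1 one_ne_zero).mul hur
  rw [show (1 : ℝ) / 1 * ‖lam‖ = ‖lam‖ by norm_num] at hdiv
  apply Tendsto.congr' _ hdiv
  filter_upwards [eventually_ge_atTop r, hN0] with k hk hNk
  have hu1 : ‖b k‖ ≠ 0 := (hupos k hk).ne'
  have hu2 : ‖b (k + 1)‖ ≠ 0 := (hupos (k + 1) (by omega)).ne'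
  have hn1 : opNormC (B ^ k) ≠ 0 := hNk.ne'
  show (opNormC (B ^ (k + 1)) / ‖b (k + 1)‖)
      / (opNormC (B ^ k) / ‖b k‖)
      * (‖b (k + 1)‖ / ‖b k‖)
      = opNormC (B ^ (k + 1)) / opNormC (B ^ k)
  field_simp
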